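/- Let u₁, u₂, v₁, v₂ : ℝ → ℝ be C² functions satisfying ü_i = −∂E/∂u_i and v̈_i = −∂E/∂v_i where E(u₁,u₂,v₁,v₂) = ℓ(u₁v₁ + u₂v₂) for a C¹ function ℓ. Then the quantity h(t) := u₁(t)u̇₂(t) − u̇₁(t)u₂(t) + v₁(t)v̇₂(t) − v̇₁(t)v₂(t) is constant in t. -/

import Mathlib

/-- For the Euclidean momentum flow (τ = 0) of a two-layer linear network in dimension 1
with 2 hidden neurons: if `ü_i = -∂E/∂u_i`, `v̈_i = -∂E/∂v_i` with
`E (u₁,u₂,v₁,v₂) = ℓ (u₁v₁ + u₂v₂)` and `ℓ` C¹, then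
`u₁ u̇₂ - u̇₁ u₂ + v₁ v̇₂ - v̇₁ v₂` is constant in time. -/
theorem stmt4 (ℓ : ℝ → ℝ) (hℓ : ContDiff ℝ 1 ℓ)
    (u₁ u₂ v₁ v₂ u₁' u₂' v₁' v₂' u₁'' u₂'' v₁'' v₂'' : ℝ → ℝ)
    (hu₁ : ∀ t, HasDerivAt u₁ (u₁' t) t) (hu₂ : ∀ t, HasDerivAt u₂ (u₂' t) t)
    (hv₁ : ∀ t, HasDerivAt v₁ (v₁' t) t) (hv₂ : ∀ t, HasDerivAt v₂ (v₂' t) t)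
    (hu₁' : ∀ t, HasDerivAt u₁' (u₁'' t) t) (hu₂' : ∀ t, HasDerivAt u₂' (u₂'' t) t)
    (hv₁' : ∀ t, HasDerivAt v₁' (v₁'' t) t) (hv₂' : ∀ t, HasDerivAt v₂' (v₂'' t) t)
    (ode₁ : ∀ t, u₁'' t = -(deriv ℓ (u₁ t * v₁ t + u₂ t * v₂ t) * v₁ t))
    (ode₂ : ∀ t, u₂'' t = -(deriv ℓ (u₁ t * v₁ t + u₂ t * v₂ t) * v₂ t))
    (ode₃ : ∀ t, v₁'' t = -(deriv ℓ (u₁ t * v₁ t + u₂ t * v₂ t) * u₁ t))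
    (ode₄ : ∀ t, v₂'' t = -(deriv ℓ (u₁ t * v₁ t + u₂ t * v₂ t) * u₂ t)) :
    ∀ t s : ℝ,
      u₁ t * u₂' t - u₁' t * u₂ t + v₁ t * v₂' t - v₁' t * v₂ t
        = u₁ s * u₂' s - u₁' s * u₂ s + v₁ s * v₂' s - v₁' s * v₂ s := by
  have key : ∀ t, HasDerivAt
      (fun t => u₁ t * u₂' t - u₁' t * u₂ t + v₁ t * v₂' t - v₁' t * v₂ t) 0 t := by
    intro t
    have h := ((((hu₁ t).mul (hu₂' t)).sub ((hu₁' t).mul (hu₂ t))).add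
      ((hv₁ t).mul (hv₂' t))).sub ((hv₁' t).mul (hv₂ t))
    refine h.congr_deriv ?_
    rw [ode₁ t, ode₂ t, ode₃ t, ode₄ t]; ring
  have := fun t s =>
    is_const_of_deriv_eq_zero (f := fun t => u₁ t * u₂' t - u₁' t * u₂ t + v₁ t * v₂' t - v₁' t * v₂ t)
      (fun x => (key x).differentiableAt) (fun x => (key x).deriv) t s
  exact this
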